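/- The negative entropy is 1-strongly convex on the interior of the simplex with respect to the ℓ1 norm: let I be a positive integer and let p, q ∈ ℝ^I satisfy p_i > 0, q_i > 0 for all i, Σ_{i=1}^I p_i = 1, and Σ_{i=1}^I q_i = 1. With Φ(x) = Σ_{i=1}^I x_i·log(x_i), one has Φ(q) − Φ(p) ≤ Σ_{i=1}^I (q_i − p_i)·(1 + log(q_i)) − (1/2)·(Σ_{i=1}^I |p_i − q_i|)². -/

import Mathlib

open Finset

noncomputable def Dfun (t : ℝ) : ℝ := Real.log t - (5*t^2 - 4*t - 1)/(2*t^2 + 4*t)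

lemma hasDerivAt_Dfun {t : ℝ} (ht : 0 < t) :
    HasDerivAt Dfun (4*(t-1)^3/(2*t^2+4*t)^2) t := by
  have hden : 2*t^2 + 4*t ≠ 0 := by positivity
  have h1 : HasDerivAt Real.log t⁻¹ t := Real.hasDerivAt_log ht.ne'
  have h2 : HasDerivAt (fun x : ℝ => 5*x^2 - 4*x - 1) (10*t - 4) t := by
    have := (((hasDerivAt_pow 2 t).const_mul (5:ℝ)).sub
      ((hasDerivAt_id t).const_mul (4:ℝ))).sub_const 1
    refine this.congr_deriv ?_
    norm_num; ring
  have h3 : HasDerivAt (fun x : ℝ => 2*x^2 + 4*x) (4*t + 4) t := by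
    have := ((hasDerivAt_pow 2 t).const_mul (2:ℝ)).add
      ((hasDerivAt_id t).const_mul (4:ℝ))
    refine this.congr_deriv ?_
    norm_num; ring
  have h4 := h2.div h3 hden
  have h5 := h1.sub h4
  refine h5.congr_deriv ?_
  have ht' : t ≠ 0 := ht.ne'
  field_simp
  ring

lemma deriv_Dfun {t : ℝ} (ht : 0 < t) :
    deriv Dfun t = 4*(t-1)^3/(2*t^2+4*t)^2 := (hasDerivAt_Dfun ht).deriv

lemma Dfun_one : Dfun 1 = 0 := by
  simp [Dfun]
  norm_num

lemma Dfun_nonneg {t : ℝ} (ht : 0 < t) : 0 ≤ Dfun t := by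
  have hcont : ∀ s : Set ℝ, (∀ x ∈ s, (0:ℝ) < x) → ContinuousOn Dfun s := by
    intro s hs x hx
    exact (hasDerivAt_Dfun (hs x hx)).differentiableAt.continuousAt.continuousWithinAt
  rcases le_or_gt 1 t with h | h
  · -- monotone on Icc 1 t
    have hmono : MonotoneOn Dfun (Set.Icc 1 t) := by
      apply monotoneOn_of_deriv_nonneg (convex_Icc 1 t)
      · exact hcont _ (fun x hx => lt_of_lt_of_le one_pos hx.1)
      · intro x hx
        rw [interior_Icc] at hx
        exact (hasDerivAt_Dfun (lt_trans one_pos hx.1)).differentiableAt.differentiableWithinAt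
      · intro x hx
        rw [interior_Icc] at hx
        rw [deriv_Dfun (lt_trans one_pos hx.1)]
        have h1 : (0:ℝ) ≤ (x-1)^3 := pow_nonneg (by linarith [hx.1]) 3
        have h2 : (0:ℝ) < (2*x^2+4*x)^2 := by
          have : (0:ℝ) < x := lt_trans one_pos hx.1
          positivity
        apply div_nonneg _ h2.le
        linarith
    have := hmono ⟨le_refl 1, h⟩ ⟨h, le_refl t⟩ h
    rwa [Dfun_one] at this
  · have hanti : AntitoneOn Dfun (Set.Icc t 1) := by
      apply antitoneOn_of_deriv_nonpos (convex_Icc t 1)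
      · exact hcont _ (fun x hx => lt_of_lt_of_le ht hx.1)
      · intro x hx
        rw [interior_Icc] at hx
        exact (hasDerivAt_Dfun (lt_trans ht hx.1)).differentiableAt.differentiableWithinAt
      · intro x hx
        rw [interior_Icc] at hx
        rw [deriv_Dfun (lt_trans ht hx.1)]
        have hx1 : x - 1 < 0 := by linarith [hx.2]
        have h1 : (x-1)^3 ≤ 0 := by
          exact Odd.pow_nonpos (by decide) hx1.le
        have h2 : (0:ℝ) < (2*x^2+4*x)^2 := by
          have := lt_trans ht hx.1
          positivity
        apply div_nonpos_of_nonpos_of_nonneg _ h2.le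
        linarith
    have := hanti ⟨le_refl t, h.le⟩ ⟨h.le, le_refl 1⟩ h.le
    rwa [Dfun_one] at this

lemma log_lower {t : ℝ} (ht : 0 < t) :
    (5*t^2 - 4*t - 1)/(2*t^2 + 4*t) ≤ Real.log t := by
  have := Dfun_nonneg ht
  simp only [Dfun] at this
  linarith

lemma scalar {x y : ℝ} (hx : 0 < x) (hy : 0 < y) :
    3*(x-y)^2/(2*(x+2*y)) ≤ x * Real.log (x/y) - x + y := by
  have ht : 0 < x/y := div_pos hx hy
  have h := log_lower ht
  have h2 : x * ((5*(x/y)^2 - 4*(x/y) - 1)/(2*(x/y)^2 + 4*(x/y))) ≤ x * Real.log (x/y) :=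
    mul_le_mul_of_nonneg_left h hx.le
  have key : x * ((5*(x/y)^2 - 4*(x/y) - 1)/(2*(x/y)^2 + 4*(x/y))) - x + y
      = 3*(x-y)^2/(2*(x+2*y)) := by
    have hy' : y ≠ 0 := hy.ne'
    have hx' : x ≠ 0 := hx.ne'
    have hd : x + 2*y ≠ 0 := by positivity
    field_simp
    ring
  linarith

/-- The negative entropy `Φ(x) = Σ_i x_i log x_i` is 1-strongly convex on the
interior of the simplex with respect to the ℓ1 norm:
`Φ(q) − Φ(p) ≤ Σ_i (q_i − p_i)(1 + log q_i) − (1/2)(Σ_i |p_i − q_i|)²`. -/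
theorem negEntropy_strongly_convex
    (I : ℕ) (hI : 0 < I) (p q : Fin I → ℝ)
    (hp0 : ∀ i, 0 < p i) (hp1 : ∑ i, p i = 1)
    (hq0 : ∀ i, 0 < q i) (hq1 : ∑ i, q i = 1) :
    (∑ i, q i * Real.log (q i)) - ∑ i, p i * Real.log (p i)
      ≤ (∑ i, (q i - p i) * (1 + Real.log (q i)))
        - (1 / 2) * (∑ i, |p i - q i|) ^ 2 := by
  set w : Fin I → ℝ := fun i => (p i + 2 * q i) / 3 with hw
  have hw0 : ∀ i, 0 < w i := fun i => by
    have := hp0 i; have := hq0 i; simp only [hw]; positivity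
  have hw1 : ∑ i, w i = 1 := by
    simp only [hw, div_eq_mul_inv]
    rw [← Finset.sum_mul, Finset.sum_add_distrib, hp1, ← Finset.mul_sum, hq1]
    norm_num
  -- Cauchy-Schwarz
  have hcs : (∑ i, |p i - q i|) ^ 2 ≤ ∑ i, (p i - q i)^2 / w i := by
    have h := Finset.sum_mul_sq_le_sq_mul_sq Finset.univ
      (fun i => |p i - q i| / Real.sqrt (w i)) (fun i => Real.sqrt (w i))
    have e1 : ∀ i : Fin I, |p i - q i| / Real.sqrt (w i) * Real.sqrt (w i) = |p i - q i| := by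
      intro i
      rw [div_mul_cancel₀]
      exact (Real.sqrt_pos.mpr (hw0 i)).ne'
    have e2 : ∀ i : Fin I, (|p i - q i| / Real.sqrt (w i))^2 = (p i - q i)^2 / w i := by
      intro i
      rw [div_pow, sq_abs, Real.sq_sqrt (hw0 i).le]
    calc (∑ i, |p i - q i|) ^ 2
        = (∑ i, |p i - q i| / Real.sqrt (w i) * Real.sqrt (w i)) ^ 2 := by
          congr 1; exact Finset.sum_congr rfl (fun i _ => (e1 i).symm)
      _ ≤ (∑ i, (|p i - q i| / Real.sqrt (w i))^2) * ∑ i, (Real.sqrt (w i))^2 := h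
      _ = ∑ i, (p i - q i)^2 / w i := by
          rw [Finset.sum_congr rfl (fun i _ => e2 i),
            Finset.sum_congr rfl (fun i _ => Real.sq_sqrt (hw0 i).le), hw1, mul_one]
  -- pointwise bound summed
  have hpt : ∑ i, (p i - q i)^2 / w i / 2 ≤ ∑ i, (p i * Real.log (p i / q i) - p i + q i) := by
    apply Finset.sum_le_sum
    intro i _
    have h := scalar (hp0 i) (hq0 i)
    have : (p i - q i)^2 / w i / 2 = 3*(p i - q i)^2/(2*(p i + 2*q i)) := by
      have : p i + 2 * q i ≠ 0 := by have := hp0 i; have := hq0 i; positivity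
      simp only [hw]
      field_simp
    rw [this]
    exact h
  -- rewrite the KL divergence
  have hkl : ∑ i, (p i * Real.log (p i / q i) - p i + q i)
      = (∑ i, (q i - p i) * (1 + Real.log (q i)))
        - (∑ i, q i * Real.log (q i)) + ∑ i, p i * Real.log (p i) := by
    rw [← Finset.sum_sub_distrib, ← Finset.sum_add_distrib]
    apply Finset.sum_congr rfl
    intro i _
    rw [Real.log_div (hp0 i).ne' (hq0 i).ne']
    ring
  have hhalf : (1/2) * (∑ i, |p i - q i|) ^ 2 ≤ ∑ i, (p i - q i)^2 / w i / 2 := by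
    rw [← Finset.sum_div]
    linarith
  linarith [hhalf.trans hpt, le_of_eq hkl]
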